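/- arXiv:1509.05790 — 2 statements merged into one kernel-verified Lean document; each statement's English description precedes it below -/
import Mathlib

section
/- Let A = [-r,r]^d be a hypercube in R^d and let z_1,...,z_t be points in A with t ≥ 2. Then there exists a perfect matching (up to one unmatched point if t is odd) σ of {1,...,t} such that for some constant B depending only on d, r, and α ∈ (0,d), the sum over matched pairs of ‖z_k − z_{σ(k)}‖^α is at most B · t^{1−α/d}. -/
open scoped BigOperators

set_option maxHeartbeats 1000000
open scoped BigOperators Classical
open Finset

-- pairing lemma
theorem my_pairing {ι : Type*} [DecidableEq ι] :
    ∀ (n : ℕ) (T : Finset ι), T.card = n →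
      ∃ g : ι → ι, Function.Involutive g ∧ (∀ k, k ∉ T → g k = k) ∧
        (∀ k ∈ T, g k ∈ T) ∧
        (∀ k l, k ∈ T → l ∈ T → g k = k → g l = l → k = l) := by
  intro n
  induction n using Nat.strong_induction_on with
  | _ n IH =>
    intro T hT
    by_cases h1 : T.card ≤ 1
    · refine ⟨id, fun _ => rfl, fun _ _ => rfl, fun k hk => hk, ?_⟩
      intro k l hk hl _ _
      exact Finset.card_le_one.mp h1 k hk l hl
    · push_neg at h1
      obtain ⟨k0, hk0, l0, hl0, hkl⟩ := Finset.one_lt_card.mp h1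
      set T' : Finset ι := (T.erase k0).erase l0 with hT'
      have hT'sub : T' ⊆ T := (Finset.erase_subset _ _).trans (Finset.erase_subset _ _)
      have hk0T' : k0 ∉ T' := fun h => (Finset.mem_erase.mp (Finset.mem_of_mem_erase h)).1 rfl
      have hl0T' : l0 ∉ T' := fun h => (Finset.mem_erase.mp h).1 rfl
      have hcard' : T'.card < n := by
        subst hT
        calc T'.card ≤ (T.erase k0).card := Finset.card_le_card (Finset.erase_subset _ _)
          _ < T.card := Finset.card_erase_lt_of_mem hk0
      obtain ⟨g, g1, g2, g3, g4⟩ := IH T'.card hcard' T' rfl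
      have hgT' : ∀ k, k ∉ T' → g k = k := g2
      refine ⟨fun k => if k = k0 then l0 else if k = l0 then k0 else g k, ?_, ?_, ?_, ?_⟩
      · intro k
        by_cases h : k = k0
        · simp [h, hkl.symm, Ne.symm hkl]
        · by_cases h' : k = l0
          · simp [h', hkl, Ne.symm hkl]
          · simp only [if_neg h, if_neg h']
            by_cases hmem : k ∈ T'
            · have hg1 : g k ∈ T' := g3 k hmem
              have : g k ≠ k0 := fun e => hk0T' (e ▸ hg1)
              have h2' : g k ≠ l0 := fun e => hl0T' (e ▸ hg1)
              simp [this, h2', g1 k]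
            · simp [hgT' k hmem, h, h']
      · intro k hk
        have h : k ≠ k0 := fun e => hk (e ▸ hk0)
        have h' : k ≠ l0 := fun e => hk (e ▸ hl0)
        have : k ∉ T' := fun e => hk (hT'sub e)
        simp [h, h', hgT' k this]
      · intro k hk
        by_cases h : k = k0
        · simpa [h] using hl0
        · by_cases h' : k = l0
          · simpa [h', Ne.symm hkl] using hk0
          · simp only [if_neg h, if_neg h']
            have hmem : k ∈ T' := by
              simp [hT', Finset.mem_erase, h, h', hk]
            exact hT'sub (g3 k hmem)
      · intro k l hk hl hfk hfl
        have hne : ∀ m, m ∈ T → (if m = k0 then l0 else if m = l0 then k0 else g m) = m → m ∈ T' ∧ g m = m := by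
          intro m hm hf
          by_cases h : m = k0
          · rw [if_pos h] at hf; exact absurd (hf ▸ h) hkl.symm
          · by_cases h' : m = l0
            · rw [if_neg h, if_pos h'] at hf; exact absurd (hf ▸ h') hkl
            · rw [if_neg h, if_neg h'] at hf
              have hmem : m ∈ T' := by simp [hT', Finset.mem_erase, h, h', hm]
              exact ⟨hmem, hf⟩
        obtain ⟨hk', hgk⟩ := hne k hk hfk
        obtain ⟨hl', hgl⟩ := hne l hl hfl
        exact g4 k l hk' hl' hgk hgl


theorem my_mean {ι : Type*} (F : Finset ι) (hF : F.Nonempty) (x : ι → ℝ)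
    (hx : ∀ i ∈ F, 0 ≤ x i) (θ : ℝ) (hθ0 : 0 < θ) (hθ1 : θ ≤ 1) :
    ∑ i ∈ F, x i ^ θ ≤ (F.card : ℝ) ^ (1 - θ) * (∑ i ∈ F, x i) ^ θ := by
  have hm0 : (0:ℝ) < F.card := by exact_mod_cast Finset.card_pos.mpr hF
  have hp : 1 ≤ 1/θ := by
    rw [le_div_iff₀ hθ0]; linarith
  have key := Real.arith_mean_le_rpow_mean F (fun _ => (F.card : ℝ)⁻¹)
      (fun i => x i ^ θ) (fun i _ => by positivity)
      (by simp [Finset.sum_const]; field_simp) (fun i hi => Real.rpow_nonneg (hx i hi) θ)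
      hp
  simp only [one_div_one_div] at key
  have hzp : ∀ i ∈ F, (F.card : ℝ)⁻¹ * (x i ^ θ) ^ (1/θ) = (F.card : ℝ)⁻¹ * x i := by
    intro i hi
    rw [← Real.rpow_mul (hx i hi), mul_one_div_cancel (ne_of_gt hθ0), Real.rpow_one]
  rw [Finset.sum_congr rfl hzp] at key
  rw [← Finset.mul_sum, ← Finset.mul_sum] at key
  have hsum0 : 0 ≤ ∑ i ∈ F, x i := Finset.sum_nonneg hx
  have h2 : ((F.card : ℝ)⁻¹ * ∑ i ∈ F, x i) ^ θ
      = (F.card : ℝ)⁻¹ ^ θ * (∑ i ∈ F, x i) ^ θ :=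
    Real.mul_rpow (by positivity) hsum0
  rw [h2] at key
  have key2 := mul_le_mul_of_nonneg_left key (le_of_lt hm0)
  have e1 : (F.card : ℝ) * ((F.card : ℝ)⁻¹ * ∑ i ∈ F, x i ^ θ) = ∑ i ∈ F, x i ^ θ := by
    field_simp
  have e2 : (F.card : ℝ) * ((F.card : ℝ)⁻¹ ^ θ * (∑ i ∈ F, x i) ^ θ)
      = (F.card : ℝ) ^ (1-θ) * (∑ i ∈ F, x i) ^ θ := by
    rw [Real.inv_rpow hm0.le, Real.rpow_sub hm0, Real.rpow_one]
    ring
  rw [e1, e2] at key2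
  exact key2

theorem my_arith (α θ C sd m t Sθ : ℝ) (hα : 0 < α) (hθ : 0 < θ) (hsd : 0 ≤ sd)
    (hC : 0 ≤ C) (hm : 2 ≤ m) (hmt : m ≤ t) (hmβ : m ^ (1-θ) ≤ 2 ^ α)
    (hms : m * sd ≤ C * (2 ^ θ - 1)) (hS : Sθ ≤ m ^ (1-θ) * t ^ θ) :
    C / 2 ^ α * (Sθ - m) + m * sd ≤ C * (t ^ θ - 1) := by
  have hm0 : (0:ℝ) < m := by linarith
  have h2a : (0:ℝ) < (2:ℝ) ^ α := Real.rpow_pos_of_pos (by norm_num) α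
  have htm : m ^ θ ≤ t ^ θ := Real.rpow_le_rpow hm0.le hmt hθ.le
  have e2 : m ^ θ * m ^ (1-θ) = m := by
    rw [← Real.rpow_add hm0]; norm_num
  have e1 : m ^ θ * ((2:ℝ) ^ α - m ^ (1-θ)) ≤ t ^ θ * ((2:ℝ) ^ α - m ^ (1-θ)) :=
    mul_le_mul_of_nonneg_right htm (by linarith)
  have k1 : Sθ - m ≤ 2 ^ α * (t ^ θ - m ^ θ) := by nlinarith
  have hCd : 0 ≤ C / 2 ^ α := by positivity
  have k4 : C / 2 ^ α * (Sθ - m) ≤ C * (t ^ θ - m ^ θ) := by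
    have h := mul_le_mul_of_nonneg_left k1 hCd
    calc C / 2 ^ α * (Sθ - m) ≤ C / 2 ^ α * (2 ^ α * (t ^ θ - m ^ θ)) := h
      _ = C * (t ^ θ - m ^ θ) := by field_simp
  have hm2θ : (2:ℝ) ^ θ ≤ m ^ θ := Real.rpow_le_rpow (by norm_num) hm hθ.le
  have k2 : m * sd ≤ C * (m ^ θ - 1) := by nlinarith
  nlinarith [k4, k2]


theorem my_diam (d : ℕ) (a : Fin d → ℝ) (L : ℝ) (hL : 0 ≤ L)
    (x y : EuclideanSpace ℝ (Fin d))
    (hx : ∀ i, a i ≤ x i ∧ x i ≤ a i + L) (hy : ∀ i, a i ≤ y i ∧ y i ≤ a i + L) :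
    ‖x - y‖ ≤ Real.sqrt d * L := by
  rw [EuclideanSpace.norm_eq]
  have h1 : ∀ i, ‖(x - y) i‖ ^ 2 ≤ L ^ 2 := by
    intro i
    have hxy : (x - y) i = x i - y i := rfl
    rw [hxy, Real.norm_eq_abs, sq_abs]
    have := hx i; have := hy i
    nlinarith [hx i, hy i]
  have h2 : ∑ i, ‖(x - y) i‖ ^ 2 ≤ (d : ℝ) * L ^ 2 := by
    calc ∑ i, ‖(x - y) i‖ ^ 2 ≤ ∑ _i : Fin d, L ^ 2 := Finset.sum_le_sum (fun i _ => h1 i)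
      _ = (d : ℝ) * L ^ 2 := by simp [Finset.sum_const, mul_comm]
  calc Real.sqrt (∑ i, ‖(x - y) i‖ ^ 2) ≤ Real.sqrt ((d:ℝ) * L ^ 2) := Real.sqrt_le_sqrt h2
    _ = Real.sqrt d * L := by
        rw [Real.sqrt_mul (Nat.cast_nonneg d), Real.sqrt_sq hL]

noncomputable def myCl (d T : ℕ) (z : Fin T → EuclideanSpace ℝ (Fin d))
    (a : Fin d → ℝ) (L : ℝ) (k : Fin T) : Fin d → Bool :=
  fun i => if z k i ≤ a i + L / 2 then true else false

theorem myCl_box (d T : ℕ) (z : Fin T → EuclideanSpace ℝ (Fin d))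
    (a : Fin d → ℝ) (L : ℝ) (k : Fin T)
    (hk : ∀ i, a i ≤ z k i ∧ z k i ≤ a i + L) (b : Fin d → Bool)
    (hb : myCl d T z a L k = b) (i : Fin d) :
    (if b i then a i else a i + L/2) ≤ z k i ∧
      z k i ≤ (if b i then a i else a i + L/2) + L/2 := by
  have hbi : (if z k i ≤ a i + L / 2 then true else false) = b i := congrFun hb i
  by_cases h : z k i ≤ a i + L / 2
  · rw [if_pos h] at hbi
    rw [← hbi]
    simp only [if_pos]
    exact ⟨(hk i).1, h⟩
  · rw [if_neg h] at hbi
    have e : (if b i = true then a i else a i + L/2) = a i + L/2 := by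
      rw [← hbi]; norm_num
    rw [e]
    push_neg at h
    exact ⟨le_of_lt h, by linarith [(hk i).2]⟩



def myConcl (d : ℕ) (α C : ℝ) (T : ℕ) (z : Fin T → EuclideanSpace ℝ (Fin d))
    (S : Finset (Fin T)) (L : ℝ) : Prop :=
  ∃ f : Fin T → Fin T, Function.Involutive f ∧ (∀ k, k ∉ S → f k = k) ∧
    (∀ k ∈ S, f k ∈ S) ∧
    (∀ k l, k ∈ S → l ∈ S → f k = k → f l = l → k = l) ∧
    ∑ k ∈ S.filter (fun k => f k ≠ k), ‖z k - z (f k)‖ ^ α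
      ≤ C * L ^ α * ((S.card : ℝ) ^ (1 - α / (d:ℝ)) - 1)

theorem my_split (d : ℕ) (hd : 1 ≤ d) (α : ℝ) (hα : 0 < α) (hαd : α < (d:ℝ)) (C : ℝ)
    (hC : C = 2 ^ d * Real.sqrt d ^ α / (2 ^ (1 - α / (d:ℝ)) - 1) + 1)
    (T : ℕ) (z : Fin T → EuclideanSpace ℝ (Fin d)) (n : ℕ)
    (IH : ∀ m, m < n → ∀ S : Finset (Fin T), S.card = m → S.Nonempty →
      ∀ (a : Fin d → ℝ) (L : ℝ), 0 ≤ L →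
        (∀ k ∈ S, ∀ i, a i ≤ z k i ∧ z k i ≤ a i + L) →
        myConcl d α C T z S L)
    (S : Finset (Fin T)) (hcard : S.card = n) (a : Fin d → ℝ) (L : ℝ) (hL : 0 ≤ L)
    (hbox : ∀ k ∈ S, ∀ i, a i ≤ z k i ∧ z k i ≤ a i + L)
    (hsplit : ∃ k ∈ S, ∃ l ∈ S, myCl d T z a L k ≠ myCl d T z a L l) :
    myConcl d α C T z S L := by
  classical
  have hd0 : (0:ℝ) < d := by exact_mod_cast hd
  set θ : ℝ := 1 - α / (d:ℝ) with hθdef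
  have hβpos : 0 < α / (d:ℝ) := div_pos hα hd0
  have hθpos : 0 < θ := by
    have : α / (d:ℝ) < 1 := (div_lt_one hd0).mpr hαd
    simp only [hθdef]; linarith
  have hθ1 : θ ≤ 1 := by simp only [hθdef]; linarith
  have h2θ : (1:ℝ) < 2 ^ θ := by
    have := Real.rpow_lt_rpow_of_exponent_lt (by norm_num : (1:ℝ) < 2) hθpos
    simpa using this
  have hsd : (0:ℝ) ≤ Real.sqrt d ^ α := Real.rpow_nonneg (Real.sqrt_nonneg _) α
  have hCpos : 0 < C := by
    rw [hC]
    have h1 : (0:ℝ) ≤ 2 ^ d * Real.sqrt d ^ α / (2 ^ θ - 1) := by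
      apply div_nonneg (by positivity) (by linarith)
    linarith
  -- cells
  set cl := myCl d T z a L with hcl
  set Sb : (Fin d → Bool) → Finset (Fin T) :=
    (fun b => S.filter (fun k => cl k = b)) with hSb
  set Bs : Finset (Fin d → Bool) := Finset.univ.filter (fun b => (Sb b).Nonempty) with hBs
  have hmemSb : ∀ k ∈ S, k ∈ Sb (cl k) := fun k hk => Finset.mem_filter.mpr ⟨hk, rfl⟩
  have hclBs : ∀ k ∈ S, cl k ∈ Bs :=
    fun k hk => Finset.mem_filter.mpr ⟨Finset.mem_univ _, ⟨k, hmemSb k hk⟩⟩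
  have hSbS : ∀ b, Sb b ⊆ S := fun b => Finset.filter_subset _ _
  have hSbcl : ∀ b, ∀ k ∈ Sb b, cl k = b := fun b k hk => (Finset.mem_filter.mp hk).2
  obtain ⟨k1, hk1, l1, hl1, h12⟩ := hsplit
  have hSbcard : ∀ b, (Sb b).card < n := by
    intro b
    rw [← hcard]
    apply Finset.card_lt_card
    rw [Finset.ssubset_iff_of_subset (hSbS b)]
    by_cases hbb : cl k1 = b
    · exact ⟨l1, hl1, fun hmem => h12 (by rw [hbb, hSbcl b l1 hmem])⟩
    · exact ⟨k1, hk1, fun hmem => hbb (hSbcl b k1 hmem)⟩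
  have hboxb : ∀ b, ∀ k ∈ Sb b, ∀ i,
      (fun i => if b i then a i else a i + L/2) i ≤ z k i ∧
        z k i ≤ (fun i => if b i then a i else a i + L/2) i + L/2 := by
    intro b k hk i
    exact myCl_box d T z a L k (hbox k (hSbS b hk)) b (hSbcl b k hk) i
  have H : ∀ b : Fin d → Bool, ∃ fb : Fin T → Fin T, Function.Involutive fb ∧
      (∀ k, k ∉ Sb b → fb k = k) ∧ (∀ k ∈ Sb b, fb k ∈ Sb b) ∧
      (∀ k l, k ∈ Sb b → l ∈ Sb b → fb k = k → fb l = l → k = l) ∧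
      ((Sb b).Nonempty →
        ∑ k ∈ (Sb b).filter (fun k => fb k ≠ k), ‖z k - z (fb k)‖ ^ α
          ≤ C * (L/2) ^ α * (((Sb b).card : ℝ) ^ θ - 1)) := by
    intro b
    by_cases hne : (Sb b).Nonempty
    · obtain ⟨f, h1, h2, h3, h4, h5⟩ := IH (Sb b).card (hSbcard b) (Sb b) rfl hne
        (fun i => if b i then a i else a i + L/2) (L/2) (by linarith) (hboxb b)
      exact ⟨f, h1, h2, h3, h4, fun _ => h5⟩
    · exact ⟨id, fun _ => rfl, fun _ _ => rfl, fun k hk => hk,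
        fun k l hk _ _ _ => absurd ⟨k, hk⟩ hne, fun h => absurd h hne⟩
  choose fb hb1 hb2 hb3 hb4 hb5 using H
  set F : Fin T → Fin T := fun k => if k ∈ S then fb (cl k) k else k with hFdef
  have hFapp : ∀ k ∈ S, F k = fb (cl k) k := fun k hk => if_pos hk
  have hFapp' : ∀ k, k ∉ S → F k = k := fun k hk => if_neg hk
  have hclF : ∀ k ∈ S, F k ∈ Sb (cl k) := by
    intro k hk
    rw [hFapp k hk]
    exact hb3 _ k (hmemSb k hk)
  have hFS : ∀ k ∈ S, F k ∈ S := fun k hk => hSbS _ (hclF k hk)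
  have hclFk : ∀ k ∈ S, cl (F k) = cl k := fun k hk => hSbcl _ _ (hclF k hk)
  have hFinv : Function.Involutive F := by
    intro k
    by_cases hk : k ∈ S
    · rw [hFapp _ (hFS k hk), hclFk k hk, hFapp k hk]
      exact hb1 (cl k) k
    · rw [hFapp' k hk, hFapp' k hk]
  set Fix : Finset (Fin T) := S.filter (fun k => F k = k) with hFix
  have hFixS : Fix ⊆ S := Finset.filter_subset _ _
  have hFixcard : Fix.card ≤ Bs.card := by
    apply Finset.card_le_card_of_injOn cl
    · intro k hk
      exact hclBs k (hFixS hk)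
    · intro p hp q hq hpq
      have hpS := hFixS hp
      have hqS := hFixS hq
      have hpfix : fb (cl p) p = p := by
        rw [← hFapp p hpS]; exact (Finset.mem_filter.mp hp).2
      have hqfix : fb (cl p) q = q := by
        rw [hpq, ← hFapp q hqS]; exact (Finset.mem_filter.mp hq).2
      exact hb4 (cl p) p q (hmemSb p hpS) (hpq ▸ hmemSb q hqS) hpfix hqfix
  obtain ⟨g, g1, g2, g3, g4⟩ := my_pairing Fix.card Fix rfl
  set F' : Fin T → Fin T := fun k => if k ∈ Fix then g k else F k with hF'def
  have hF'fix : ∀ k ∈ Fix, F' k = g k := fun k hk => if_pos hk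
  have hF'nfix : ∀ k, k ∉ Fix → F' k = F k := fun k hk => if_neg hk
  have hFnotFix : ∀ k, k ∉ Fix → F k ∉ Fix := by
    intro k hk hFk
    by_cases hkS : k ∈ S
    · have h1 : F (F k) = F k := (Finset.mem_filter.mp hFk).2
      rw [hFinv k] at h1
      exact hk (Finset.mem_filter.mpr ⟨hkS, h1.symm⟩)
    · rw [hFapp' k hkS] at hFk; exact hk hFk
  have hF'inv : Function.Involutive F' := by
    intro k
    by_cases hk : k ∈ Fix
    · rw [hF'fix k hk, hF'fix (g k) (g3 k hk), g1 k]
    · rw [hF'nfix k hk, hF'nfix (F k) (hFnotFix k hk), hFinv k]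
  have hF'out : ∀ k, k ∉ S → F' k = k := by
    intro k hk
    rw [hF'nfix k (fun h => hk (hFixS h)), hFapp' k hk]
  have hF'S : ∀ k ∈ S, F' k ∈ S := by
    intro k hk
    by_cases hkf : k ∈ Fix
    · rw [hF'fix k hkf]; exact hFixS (g3 k hkf)
    · rw [hF'nfix k hkf]; exact hFS k hk
  have hF'uniq : ∀ k l, k ∈ S → l ∈ S → F' k = k → F' l = l → k = l := by
    intro k l hk hl hfk hfl
    have hkey : ∀ m, m ∈ S → F' m = m → m ∈ Fix ∧ g m = m := by
      intro m hm hfm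
      by_cases hmf : m ∈ Fix
      · exact ⟨hmf, by rw [← hF'fix m hmf, hfm]⟩
      · rw [hF'nfix m hmf] at hfm
        have : m ∈ Fix := by rw [hFix]; exact Finset.mem_filter.mpr ⟨hm, hfm⟩
        exact absurd this hmf
    obtain ⟨hk', hgk⟩ := hkey k hk hfk
    obtain ⟨hl', hgl⟩ := hkey l hl hfl
    exact g4 k l hk' hl' hgk hgl
  refine ⟨F', hF'inv, hF'out, hF'S, hF'uniq, ?_⟩
  have hcostA : ∀ k ∈ S, ∀ l ∈ S, ‖z k - z l‖ ^ α ≤ Real.sqrt d ^ α * L ^ α := by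
    intro k hk l hl
    have h1 : ‖z k - z l‖ ≤ Real.sqrt d * L :=
      my_diam d a L hL (z k) (z l) (hbox k hk) (hbox l hl)
    calc ‖z k - z l‖ ^ α ≤ (Real.sqrt d * L) ^ α :=
          Real.rpow_le_rpow (norm_nonneg _) h1 hα.le
      _ = Real.sqrt d ^ α * L ^ α := Real.mul_rpow (Real.sqrt_nonneg _) hL
  set A : Finset (Fin T) := Fix.filter (fun k => g k ≠ k) with hA
  set Bset : Finset (Fin T) := S \ Fix with hBset
  have hunion : S.filter (fun k => F' k ≠ k) = A ∪ Bset := by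
    ext k
    simp only [hA, hBset, Finset.mem_filter, Finset.mem_union, Finset.mem_sdiff]
    constructor
    · rintro ⟨hkS, hkne⟩
      by_cases hkf : k ∈ Fix
      · left; exact ⟨hkf, by rw [← hF'fix k hkf]; exact hkne⟩
      · right; exact ⟨hkS, hkf⟩
    · rintro (⟨hkf, hkne⟩ | ⟨hkS, hkf⟩)
      · exact ⟨hFixS hkf, by rw [hF'fix k hkf]; exact hkne⟩
      · refine ⟨hkS, ?_⟩
        rw [hF'nfix k hkf]
        intro he
        exact hkf (by rw [hFix]; exact Finset.mem_filter.mpr ⟨hkS, he⟩)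
  have hdisjAB : Disjoint A Bset := by
    rw [Finset.disjoint_left]
    intro k hkA hkB
    rw [hBset] at hkB
    rw [hA] at hkA
    exact (Finset.mem_sdiff.mp hkB).2 (Finset.mem_filter.mp hkA).1
  have hAsum : ∑ k ∈ A, ‖z k - z (F' k)‖ ^ α
      ≤ (Bs.card : ℝ) * (Real.sqrt d ^ α * L ^ α) := by
    have h1 : ∀ k ∈ A, ‖z k - z (F' k)‖ ^ α ≤ Real.sqrt d ^ α * L ^ α := by
      intro k hk
      have hkFix : k ∈ Fix := (Finset.mem_filter.mp hk).1
      rw [hF'fix k hkFix]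
      exact hcostA k (hFixS hkFix) (g k) (hFixS (g3 k hkFix))
    calc ∑ k ∈ A, ‖z k - z (F' k)‖ ^ α ≤ ∑ _k ∈ A, (Real.sqrt d ^ α * L ^ α) :=
          Finset.sum_le_sum h1
      _ = (A.card : ℝ) * (Real.sqrt d ^ α * L ^ α) := by
          rw [Finset.sum_const, nsmul_eq_mul]
      _ ≤ (Bs.card : ℝ) * (Real.sqrt d ^ α * L ^ α) := by
          apply mul_le_mul_of_nonneg_right _ (by positivity)
          exact_mod_cast le_trans (Finset.card_le_card (Finset.filter_subset _ _)) hFixcard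
  have hBdecomp : Bset = Bs.biUnion (fun b => (Sb b).filter (fun k => fb b k ≠ k)) := by
    ext k
    simp only [hBset, Finset.mem_sdiff, Finset.mem_biUnion]
    constructor
    · rintro ⟨hkS, hkf⟩
      refine ⟨cl k, hclBs k hkS, Finset.mem_filter.mpr ⟨hmemSb k hkS, ?_⟩⟩
      rw [← hFapp k hkS]
      intro he
      exact hkf (by rw [hFix]; exact Finset.mem_filter.mpr ⟨hkS, he⟩)
    · rintro ⟨b, _hb, hkb⟩
      obtain ⟨hkSb, hkne⟩ := Finset.mem_filter.mp hkb
      have hkS : k ∈ S := hSbS b hkSb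
      have hclk : cl k = b := hSbcl b k hkSb
      refine ⟨hkS, fun hkf => ?_⟩
      have h3 : F k = k := by rw [hFix] at hkf; exact (Finset.mem_filter.mp hkf).2
      rw [hFapp k hkS, hclk] at h3
      exact hkne h3
  have hpd : (↑Bs : Set (Fin d → Bool)).PairwiseDisjoint
      (fun b => (Sb b).filter (fun k => fb b k ≠ k)) := by
    intro p _hp q _hq hpq
    simp only [Function.onFun]
    rw [Finset.disjoint_left]
    intro k hkp hkq
    have h1 := hSbcl p k (Finset.mem_filter.mp hkp).1
    have h2 := hSbcl q k (Finset.mem_filter.mp hkq).1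
    exact hpq (h1 ▸ h2 ▸ rfl)
  have hBsum : ∑ k ∈ Bset, ‖z k - z (F' k)‖ ^ α
      ≤ ∑ b ∈ Bs, (C * (L/2) ^ α * (((Sb b).card : ℝ) ^ θ - 1)) := by
    have e1 : ∑ k ∈ Bset, ‖z k - z (F' k)‖ ^ α = ∑ k ∈ Bset, ‖z k - z (F k)‖ ^ α := by
      apply Finset.sum_congr rfl
      intro k hk
      rw [hBset] at hk
      rw [hF'nfix k (Finset.mem_sdiff.mp hk).2]
    rw [e1, hBdecomp, Finset.sum_biUnion hpd]
    apply Finset.sum_le_sum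
    intro b hb
    have hbne : (Sb b).Nonempty := (Finset.mem_filter.mp hb).2
    have e2 : ∑ k ∈ (Sb b).filter (fun k => fb b k ≠ k), ‖z k - z (F k)‖ ^ α
        = ∑ k ∈ (Sb b).filter (fun k => fb b k ≠ k), ‖z k - z (fb b k)‖ ^ α := by
      apply Finset.sum_congr rfl
      intro k hk
      have hkSb : k ∈ Sb b := (Finset.mem_filter.mp hk).1
      rw [hFapp k (hSbS b hkSb), hSbcl b k hkSb]
    rw [e2]
    exact hb5 b hbne
  have hsum_card : ∑ b ∈ Bs, (Sb b).card = n := by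
    rw [← hcard]
    exact (Finset.card_eq_sum_card_fiberwise (fun k hk => hclBs k hk)).symm
  have hm2' : 1 < Bs.card :=
    Finset.one_lt_card.mpr ⟨cl k1, hclBs k1 hk1, cl l1, hclBs l1 hl1, h12⟩
  have hBsne : Bs.Nonempty := Finset.card_pos.mp (by omega)
  have hmd : Bs.card ≤ 2 ^ d := by
    calc Bs.card ≤ Fintype.card (Fin d → Bool) := Finset.card_le_univ _
      _ = 2 ^ d := by simp [Fintype.card_fun]
  have hnm : Bs.card ≤ n := by
    rw [← hsum_card]
    calc Bs.card = ∑ _b ∈ Bs, 1 := by simp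
      _ ≤ ∑ b ∈ Bs, (Sb b).card :=
          Finset.sum_le_sum (fun b hb => Finset.card_pos.mpr (Finset.mem_filter.mp hb).2)
  set m : ℝ := (Bs.card : ℝ) with hm
  set Sθ : ℝ := ∑ b ∈ Bs, ((Sb b).card : ℝ) ^ θ with hSθ
  have hcast : ∑ b ∈ Bs, ((Sb b).card : ℝ) = (n : ℝ) := by
    rw [← Nat.cast_sum, hsum_card]
  have hmean : Sθ ≤ m ^ (1 - θ) * ((n : ℝ)) ^ θ := by
    have h := my_mean Bs hBsne (fun b => ((Sb b).card : ℝ)) (fun b _ => Nat.cast_nonneg _)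
      θ hθpos hθ1
    rw [hcast] at h
    exact h
  have hmle : m ≤ ((2:ℝ)) ^ (d:ℕ) := by rw [hm]; exact_mod_cast hmd
  have hmβ : m ^ (1 - θ) ≤ 2 ^ α := by
    have h1b : (0:ℝ) ≤ m := Nat.cast_nonneg _
    calc m ^ (1-θ) ≤ ((2:ℝ) ^ (d:ℕ)) ^ (1-θ) :=
          Real.rpow_le_rpow h1b hmle (by linarith)
      _ = (2:ℝ) ^ ((d:ℝ) * (1-θ)) := by
          rw [← Real.rpow_natCast 2 d, ← Real.rpow_mul (by norm_num : (0:ℝ) ≤ 2)]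
      _ = 2 ^ α := by
          congr 1
          rw [hθdef]
          field_simp
          ring
  have hms : m * Real.sqrt d ^ α ≤ C * (2 ^ θ - 1) := by
    have hne : (2:ℝ) ^ θ - 1 ≠ 0 := by linarith
    have e : C * (2 ^ θ - 1) = 2 ^ d * Real.sqrt d ^ α + (2 ^ θ - 1) := by
      rw [hC]
      field_simp
    rw [e]
    have h2d : m * Real.sqrt d ^ α ≤ 2 ^ d * Real.sqrt d ^ α := by
      apply mul_le_mul_of_nonneg_right _ hsd
      exact_mod_cast hmle
    linarith [h2θ]
  have harith := my_arith α θ C (Real.sqrt d ^ α) m (n:ℝ) Sθ hα hθpos hsd hCpos.le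
      (by rw [hm]; exact_mod_cast hm2') (by rw [hm]; exact_mod_cast hnm) hmβ hms hmean
  have hLα : (0:ℝ) ≤ L ^ α := Real.rpow_nonneg hL α
  have hhalf : (L/2) ^ α = L ^ α / 2 ^ α := Real.div_rpow hL (by norm_num : (0:ℝ) ≤ 2) α
  have hBsum2 : ∑ b ∈ Bs, (C * (L/2) ^ α * (((Sb b).card : ℝ) ^ θ - 1))
      = C * (L/2) ^ α * (Sθ - m) := by
    rw [← Finset.mul_sum, hSθ, hm]
    congr 1
    rw [Finset.sum_sub_distrib, Finset.sum_const, nsmul_eq_mul, mul_one]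
  rw [← hθdef, hunion, Finset.sum_union hdisjAB, hcard]
  calc ∑ k ∈ A, ‖z k - z (F' k)‖ ^ α + ∑ k ∈ Bset, ‖z k - z (F' k)‖ ^ α
      ≤ m * (Real.sqrt d ^ α * L ^ α) + C * (L/2) ^ α * (Sθ - m) :=
        add_le_add hAsum (le_trans hBsum (le_of_eq hBsum2))
    _ = (C / 2 ^ α * (Sθ - m) + m * Real.sqrt d ^ α) * L ^ α := by
        rw [hhalf]; ring
    _ ≤ (C * ((n:ℝ) ^ θ - 1)) * L ^ α := mul_le_mul_of_nonneg_right harith hLα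
    _ = C * L ^ α * ((n:ℝ) ^ θ - 1) := by ring



theorem my_half (d T : ℕ) (z : Fin T → EuclideanSpace ℝ (Fin d)) (a : Fin d → ℝ) (L : ℝ)
    (k l : Fin T)
    (hk : ∀ i, a i ≤ z k i ∧ z k i ≤ a i + L) (hl : ∀ i, a i ≤ z l i ∧ z l i ≤ a i + L)
    (i : Fin d) (hcl : myCl d T z a L k = myCl d T z a L l) :
    |z k i - z l i| ≤ L / 2 := by
  have h := congrFun hcl i
  simp only [myCl] at h
  by_cases h1 : z k i ≤ a i + L/2 <;> by_cases h2 : z l i ≤ a i + L/2 <;>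
    simp [h1, h2] at h <;> rw [abs_le] <;>
    constructor <;> (try push_neg at *) <;> [skip; skip; skip; skip] <;>
    first
      | linarith [(hk i).1, (hk i).2, (hl i).1, (hl i).2]

theorem my_core (d : ℕ) (hd : 1 ≤ d) (α : ℝ) (hα : 0 < α) (hαd : α < (d:ℝ)) (C : ℝ)
    (hC : C = 2 ^ d * Real.sqrt d ^ α / (2 ^ (1 - α / (d:ℝ)) - 1) + 1)
    (T : ℕ) (z : Fin T → EuclideanSpace ℝ (Fin d)) :
    ∀ (n : ℕ) (S : Finset (Fin T)), S.card = n → S.Nonempty →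
      ∀ (a : Fin d → ℝ) (L : ℝ), 0 ≤ L →
        (∀ k ∈ S, ∀ i, a i ≤ z k i ∧ z k i ≤ a i + L) →
        myConcl d α C T z S L := by
  have hd0 : (0:ℝ) < d := by exact_mod_cast hd
  have hβpos : 0 < α / (d:ℝ) := div_pos hα hd0
  have hθpos : 0 < 1 - α / (d:ℝ) := by
    have : α / (d:ℝ) < 1 := (div_lt_one hd0).mpr hαd
    linarith
  have h2θ : (1:ℝ) < 2 ^ (1 - α / (d:ℝ)) := by
    have := Real.rpow_lt_rpow_of_exponent_lt (by norm_num : (1:ℝ) < 2) hθpos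
    simpa using this
  have hsd : (0:ℝ) ≤ Real.sqrt d ^ α := Real.rpow_nonneg (Real.sqrt_nonneg _) α
  have hCpos : 0 < C := by
    rw [hC]
    have h1 : (0:ℝ) ≤ 2 ^ d * Real.sqrt d ^ α / (2 ^ (1 - α / (d:ℝ)) - 1) :=
      div_nonneg (by positivity) (by linarith)
    linarith
  intro n
  induction n using Nat.strong_induction_on with
  | _ n IH =>
  intro S hcard hne a L hL hbox
  by_cases hsame : ∀ k ∈ S, ∀ l ∈ S, z k = z l
  · -- all points equal: any pairing has zero cost
    obtain ⟨g, g1, g2, g3, g4⟩ := my_pairing S.card S rfl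
    refine ⟨g, g1, g2, g3, g4, ?_⟩
    have hz : ∀ k ∈ S.filter (fun k => g k ≠ k), ‖z k - z (g k)‖ ^ α = 0 := by
      intro k hk
      have hkS : k ∈ S := (Finset.mem_filter.mp hk).1
      rw [hsame k hkS (g k) (g3 k hkS)]
      simp [Real.zero_rpow (ne_of_gt hα)]
    rw [Finset.sum_congr rfl hz, Finset.sum_const, smul_zero]
    have h1 : (1:ℝ) ≤ (S.card : ℝ) := by
      exact_mod_cast Finset.card_pos.mpr hne
    have h2 : (1:ℝ) ≤ (S.card : ℝ) ^ (1 - α / (d:ℝ)) := by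
      calc (1:ℝ) = 1 ^ (1 - α / (d:ℝ)) := (Real.one_rpow _).symm
        _ ≤ (S.card : ℝ) ^ (1 - α / (d:ℝ)) := Real.rpow_le_rpow zero_le_one h1 hθpos.le
    have h3 : (0:ℝ) ≤ L ^ α := Real.rpow_nonneg hL α
    have := mul_nonneg (mul_nonneg hCpos.le h3) (by linarith : (0:ℝ) ≤ (S.card : ℝ) ^ (1 - α / (d:ℝ)) - 1)
    linarith
  · push_neg at hsame
    obtain ⟨k0, hk0, l0, hl0, hzne⟩ := hsame
    have hex : ∃ i, z k0 i ≠ z l0 i := by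
      by_contra h
      push_neg at h
      exact hzne (PiLp.ext h)
    obtain ⟨i0, hi0⟩ := hex
    set δ := |z k0 i0 - z l0 i0| with hδ
    have hδpos : 0 < δ := abs_pos.mpr (sub_ne_zero.mpr hi0)
    obtain ⟨N, hN⟩ : ∃ N : ℕ, L ≤ 2 ^ N * δ := by
      obtain ⟨N, hN⟩ := pow_unbounded_of_one_lt (L/δ) (by norm_num : (1:ℝ) < 2)
      exact ⟨N, le_of_lt ((div_lt_iff₀ hδpos).mp hN)⟩
    induction N generalizing a L with
    | zero =>
      by_cases hsp : ∃ k ∈ S, ∃ l ∈ S, myCl d T z a L k ≠ myCl d T z a L l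
      · exact my_split d hd α hα hαd C hC T z n IH S hcard a L hL hbox hsp
      · exfalso
        push_neg at hsp
        have hcl : myCl d T z a L k0 = myCl d T z a L l0 := hsp k0 hk0 l0 hl0
        have := my_half d T z a L k0 l0 (hbox k0 hk0) (hbox l0 hl0) i0 hcl
        rw [pow_zero, one_mul] at hN
        rw [← hδ] at this
        linarith
    | succ N ihN =>
      by_cases hsp : ∃ k ∈ S, ∃ l ∈ S, myCl d T z a L k ≠ myCl d T z a L l
      · exact my_split d hd α hα hαd C hC T z n IH S hcard a L hL hbox hsp
      · push_neg at hsp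
        set b0 := myCl d T z a L k0 with hb0
        have hbox' : ∀ k ∈ S, ∀ i,
            (fun i => if b0 i then a i else a i + L/2) i ≤ z k i ∧
              z k i ≤ (fun i => if b0 i then a i else a i + L/2) i + L/2 := by
          intro k hk i
          exact myCl_box d T z a L k (hbox k hk) b0 (hsp k hk k0 hk0) i
        have hL2 : (0:ℝ) ≤ L/2 := by linarith
        have hN2 : L/2 ≤ 2 ^ N * δ := by
          rw [pow_succ] at hN
          linarith
        obtain ⟨f, h1, h2, h3, h4, h5⟩ := ihN _ (L/2) hL2 hbox' hN2
        refine ⟨f, h1, h2, h3, h4, le_trans h5 ?_⟩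
        have hmono : (L/2) ^ α ≤ L ^ α :=
          Real.rpow_le_rpow hL2 (by linarith) hα.le
        have hfac : (0:ℝ) ≤ (S.card : ℝ) ^ (1 - α / (d:ℝ)) - 1 := by
          have h1' : (1:ℝ) ≤ (S.card : ℝ) := by
            exact_mod_cast Finset.card_pos.mpr ⟨k0, hk0⟩
          have : (1:ℝ) = 1 ^ (1 - α / (d:ℝ)) := (Real.one_rpow _).symm
          nlinarith [Real.rpow_le_rpow zero_le_one h1' hθpos.le, Real.one_rpow (1 - α / (d:ℝ))]
        apply mul_le_mul_of_nonneg_right _ hfac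
        exact mul_le_mul_of_nonneg_left hmono hCpos.le


/-- Points in the cube `[-r,r]^d` admit a matching (a permutation of order 2
with at most one fixed point) whose total `α`-power cost is at most `B * t^(1-α/d)`,
for a constant `B` depending only on `d`, `r` and `α ∈ (0,d)`. -/
theorem stmt_0 (d : ℕ) (hd : 1 ≤ d) (r : ℝ) (hr : 0 < r) (α : ℝ)
    (hα : 0 < α) (hαd : α < d) :
    ∃ B : ℝ, 0 < B ∧ ∀ t : ℕ, 2 ≤ t →
      ∀ z : Fin t → EuclideanSpace ℝ (Fin d),
        (∀ k, ∀ i, |z k i| ≤ r) →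
        ∃ σ : Equiv.Perm (Fin t),
          (∀ k, σ (σ k) = k) ∧
          (∀ k l, σ k = k → σ l = l → k = l) ∧
          (∑ k ∈ Finset.univ.filter (fun k => σ k ≠ k), ‖z k - z (σ k)‖ ^ α)
            ≤ B * (t : ℝ) ^ (1 - α / d) := by
  set C : ℝ := 2 ^ d * Real.sqrt d ^ α / (2 ^ (1 - α / (d:ℝ)) - 1) + 1 with hC
  have hd0 : (0:ℝ) < d := by exact_mod_cast hd
  have hθpos : 0 < 1 - α / (d:ℝ) := by
    have : α / (d:ℝ) < 1 := (div_lt_one hd0).mpr hαd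
    linarith
  have h2θ : (1:ℝ) < 2 ^ (1 - α / (d:ℝ)) := by
    have := Real.rpow_lt_rpow_of_exponent_lt (by norm_num : (1:ℝ) < 2) hθpos
    simpa using this
  have hCpos : 0 < C := by
    rw [hC]
    have h1 : (0:ℝ) ≤ 2 ^ d * Real.sqrt d ^ α / (2 ^ (1 - α / (d:ℝ)) - 1) :=
      div_nonneg (by positivity) (by linarith)
    linarith
  have h2r : (0:ℝ) < (2*r) ^ α := Real.rpow_pos_of_pos (by linarith) α
  refine ⟨C * (2*r) ^ α, mul_pos hCpos h2r, ?_⟩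
  intro t ht z hz
  have hne : (Finset.univ : Finset (Fin t)).Nonempty :=
    ⟨⟨0, by omega⟩, Finset.mem_univ _⟩
  have hbox : ∀ k ∈ (Finset.univ : Finset (Fin t)), ∀ i,
      (fun _ => -r) i ≤ z k i ∧ z k i ≤ (fun _ => -r) i + 2*r := by
    intro k _ i
    have := abs_le.mp (hz k i)
    constructor <;> simp <;> linarith [this.1, this.2]
  obtain ⟨f, h1, _h2, _h3, h4, h5⟩ := my_core d hd α hα hαd C hC t z
    (Finset.univ.card) Finset.univ rfl hne (fun _ => -r) (2*r) (by linarith) hbox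
  refine ⟨Function.Involutive.toPerm f h1, fun k => h1 k, ?_, ?_⟩
  · intro k l hk hl
    exact h4 k l (Finset.mem_univ _) (Finset.mem_univ _) hk hl
  · have hσ : ∀ k, (Function.Involutive.toPerm f h1) k = f k := fun _ => rfl
    simp only [hσ]
    have hcard : ((Finset.univ : Finset (Fin t)).card : ℝ) = (t : ℝ) := by
      simp
    rw [hcard] at h5
    have htθ : (0:ℝ) ≤ (t:ℝ) ^ (1 - α / (d:ℝ)) :=
      Real.rpow_nonneg (Nat.cast_nonneg _) _
    calc ∑ k ∈ Finset.univ.filter (fun k => f k ≠ k), ‖z k - z (f k)‖ ^ α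
        ≤ C * (2*r) ^ α * ((t:ℝ) ^ (1 - α / (d:ℝ)) - 1) := h5
      _ ≤ C * (2*r) ^ α * (t:ℝ) ^ (1 - α / (d:ℝ)) := by
          have h0 : (0:ℝ) ≤ C * (2*r) ^ α := (mul_pos hCpos h2r).le
          have := mul_le_mul_of_nonneg_left
            (by linarith : (t:ℝ) ^ (1 - α / (d:ℝ)) - 1 ≤ (t:ℝ) ^ (1 - α / (d:ℝ))) h0
          linarith
end

section
/- Let p ∈ (0,1) and let f, g be probability densities on R^d with f ≠ g on a set of positive Lebesgue measure. Then ∫ 2p(1−p) f(z)g(z)/(p f(z) + (1−p) g(z)) dz < 2p(1−p). -/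
open MeasureTheory

lemma stmt8_key (p a b : ℝ) (hp0 : 0 < p) (hp1 : p < 1) (ha : 0 ≤ a) (hb : 0 ≤ b) :
    2 * p * (1 - p) * a * b / (p * a + (1 - p) * b) ≤ 2 * p * (1 - p) * ((1 - p) * a + p * b) ∧
    (a ≠ b → 2 * p * (1 - p) * a * b / (p * a + (1 - p) * b)
      < 2 * p * (1 - p) * ((1 - p) * a + p * b)) := by
  have h1p : 0 < 1 - p := by linarith
  rcases eq_or_lt_of_le (show (0:ℝ) ≤ p * a + (1 - p) * b by positivity) with hD | hD
  · have ha0 : a = 0 := by nlinarith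
    have hb0 : b = 0 := by nlinarith
    constructor
    · rw [← hD, div_zero, ha0, hb0]; nlinarith
    · intro h; exact absurd (ha0.trans hb0.symm) h
  · constructor
    · rw [div_le_iff₀ hD]
      nlinarith [mul_nonneg (mul_pos (mul_pos hp0 h1p) (mul_pos hp0 h1p)).le (sq_nonneg (a - b))]
    · intro hab
      have hsq : 0 < (a - b) ^ 2 := by
        have h := sub_ne_zero.2 hab
        positivity
      rw [div_lt_iff₀ hD]
      nlinarith [mul_pos (mul_pos (mul_pos hp0 h1p) (mul_pos hp0 h1p)) hsq]

/-- Strict separation inequality: for probability densities `f ≠ g` (on a set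
of positive Lebesgue measure) and `p ∈ (0,1)`,
`∫ 2p(1-p)fg/(pf+(1-p)g) < 2p(1-p)`. (The integrand is 0 where the denominator vanishes,
which is the Lean convention for division by zero.) -/
theorem stmt_8 (d : ℕ) (p : ℝ) (hp : p ∈ Set.Ioo (0:ℝ) 1)
    (f g : EuclideanSpace ℝ (Fin d) → ℝ)
    (hfm : Measurable f) (hgm : Measurable g)
    (hf0 : ∀ z, 0 ≤ f z) (hg0 : ∀ z, 0 ≤ g z)
    (hf1 : ∫ z, f z = 1) (hg1 : ∫ z, g z = 1)
    (hne : ¬ (f =ᵐ[volume] g)) :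
    (∫ z, 2 * p * (1 - p) * f z * g z / (p * f z + (1 - p) * g z)) < 2 * p * (1 - p) := by
  obtain ⟨hp0, hp1⟩ := hp
  have h1p : 0 < 1 - p := by linarith
  set F : EuclideanSpace ℝ (Fin d) → ℝ :=
    fun z => 2 * p * (1 - p) * f z * g z / (p * f z + (1 - p) * g z) with hF
  set G : EuclideanSpace ℝ (Fin d) → ℝ :=
    fun z => 2 * p * (1 - p) * ((1 - p) * f z + p * g z) with hG
  have hfi : Integrable f := by
    by_contra h
    rw [integral_undef h] at hf1; norm_num at hf1
  have hgi : Integrable g := by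
    by_contra h
    rw [integral_undef h] at hg1; norm_num at hg1
  have hGi : Integrable G := by
    apply Integrable.const_mul
    exact (hfi.const_mul _).add (hgi.const_mul _)
  have hFm : Measurable F := by
    apply Measurable.div
    · exact (((measurable_const.mul hfm)).mul hgm)
    · exact (hfm.const_mul p).add (hgm.const_mul (1 - p))
  have hF0 : ∀ z, 0 ≤ F z := by
    intro z
    apply div_nonneg
    · have := hf0 z; have := hg0 z; positivity
    · have := hf0 z; have := hg0 z; positivity
  have hle : ∀ z, F z ≤ G z := fun z =>
    (stmt8_key p (f z) (g z) hp0 hp1 (hf0 z) (hg0 z)).1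
  have hFi : Integrable F := by
    apply Integrable.mono' hGi hFm.aestronglyMeasurable
    exact Filter.Eventually.of_forall fun z => by
      rw [Real.norm_eq_abs, abs_of_nonneg (hF0 z)]; exact hle z
  have hGint : ∫ z, G z = 2 * p * (1 - p) := by
    rw [hG]
    simp only []
    rw [integral_const_mul, integral_add (hfi.const_mul _) (hgi.const_mul _),
      integral_const_mul, integral_const_mul, hf1, hg1]
    ring
  have hle' : ∫ z, F z ≤ ∫ z, G z :=
    integral_mono hFi hGi hle
  rcases eq_or_lt_of_le hle' with heq | hlt
  · exfalso
    have hdiff : ∫ z, (G z - F z) = 0 := by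
      rw [integral_sub hGi hFi]; linarith
    have h0 : (fun z => G z - F z) =ᵐ[volume] 0 := by
      rw [← integral_eq_zero_iff_of_nonneg (fun z => sub_nonneg.2 (hle z)) (hGi.sub hFi)]
      exact hdiff
    apply hne
    filter_upwards [h0] with z hz
    by_contra hfg
    have := (stmt8_key p (f z) (g z) hp0 hp1 (hf0 z) (hg0 z)).2 hfg
    simp only [Pi.zero_apply] at hz
    have : G z - F z > 0 := by simp only [hF, hG] at *; linarith
    linarith
  · rw [hGint] at hlt; exact hlt
end
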